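/- arXiv:1502.04604 — 3 statements merged into one kernel-verified Lean document; each statement's English description precedes it below -/
import Mathlib

section
/- (Injectivity of the change of variables) Let n ≥ 1 and for j ∈ {1,…,n} define X_j : ℝ^n → ℝ by X_j(x) = cos⁺_{(1,…,1,0,…,0)}(x), where the label has j entries equal to 1 followed by n−j entries equal to 0. Then the map φ : F(S̃_n^aff) → ℝ^n given by φ(x) = (X_1(x), …, X_n(x)) is injective on the fundamental domain F(S̃_n^aff) = {x ∈ ℝ^n : 1 ≥ x_1 ≥ x_2 ≥ … ≥ x_n ≥ 0}. -/
open Real Finset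

/-- The symmetric multivariate cosine function
`cos⁺_λ(x) = Σ_{σ ∈ S_n} ∏_{i=1}^n cos(π λ_{σ(i)} x_i)`. -/
noncomputable def cosPlus (n : ℕ) (lam x : Fin n → ℝ) : ℝ :=
  ∑ σ : Equiv.Perm (Fin n), ∏ i : Fin n, Real.cos (Real.pi * lam (σ i) * x i)

/-- The polynomial variable `X_j = cos⁺_{(1,…,1,0,…,0)}` with `j+1` ones (for `j : Fin n`,
corresponding to the 1-indexed variable `X_{j+1}`). -/
noncomputable def Xvar (n : ℕ) (j : Fin n) (x : Fin n → ℝ) : ℝ :=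
  cosPlus n (fun i => if i ≤ j then (1 : ℝ) else 0) x

/-- The fundamental domain `F(S̃_n^aff) = {x ∈ ℝ^n : 1 ≥ x_1 ≥ x_2 ≥ … ≥ x_n ≥ 0}`. -/
def Fdom (n : ℕ) : Set (Fin n → ℝ) :=
  {x | (∀ i j : Fin n, i ≤ j → x j ≤ x i) ∧ ∀ i : Fin n, 0 ≤ x i ∧ x i ≤ 1}

lemma Xvar_eq_sum (n : ℕ) (j : Fin n) (x : Fin n → ℝ) :
    Xvar n j x = ∑ σ : Equiv.Perm (Fin n), ∏ k ∈ Finset.Iic j, Real.cos (Real.pi * x (σ k)) := by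
  unfold Xvar cosPlus
  have h1 : ∀ σ : Equiv.Perm (Fin n),
      (∏ i : Fin n, Real.cos (Real.pi * (if σ i ≤ j then (1:ℝ) else 0) * x i))
      = ∏ i ∈ Finset.univ.filter (fun i => σ i ≤ j), Real.cos (Real.pi * x i) := by
    intro σ
    rw [Finset.prod_filter]
    refine Finset.prod_congr rfl fun i _ => ?_
    split_ifs <;> simp
  simp_rw [h1]
  refine Fintype.sum_equiv (Equiv.inv (Equiv.Perm (Fin n))) _ _ fun σ => ?_
  show ∏ i ∈ Finset.univ.filter (fun i => σ i ≤ j), Real.cos (Real.pi * x i)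
      = ∏ k ∈ Finset.Iic j, Real.cos (Real.pi * x (σ⁻¹ k))
  rw [← Finset.prod_image (s := Finset.Iic j) (g := (σ⁻¹ : Equiv.Perm (Fin n)))
      (f := fun i => Real.cos (Real.pi * x i)) (by intro a _ b _ h; exact σ⁻¹.injective h)]
  congr 1
  ext i
  simp only [Finset.mem_image, Finset.mem_filter, Finset.mem_univ, true_and, Finset.mem_Iic]
  constructor
  · intro h; exact ⟨σ i, h, by simp⟩
  · rintro ⟨k, hk, rfl⟩; simpa using hk

lemma exists_perm_image {n : ℕ} (s t : Finset (Fin n)) (h : s.card = t.card) :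
    ∃ p : Equiv.Perm (Fin n), s.image p = t := by
  classical
  have hc : ∀ (u : Finset (Fin n)), {x // x ∉ u} ≃ {x // x ∈ uᶜ} :=
    fun u => Equiv.subtypeEquivRight (fun x => (Finset.mem_compl).symm)
  have hcard : (sᶜ : Finset (Fin n)).card = (tᶜ : Finset (Fin n)).card := by
    rw [Finset.card_compl, Finset.card_compl, h]
  let e : {x // x ∈ s} ≃ {x // x ∈ t} := Finset.equivOfCardEq h
  let e' : {x // x ∉ s} ≃ {x // x ∉ t} :=
    (hc s).trans ((Finset.equivOfCardEq hcard).trans (hc t).symm)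
  let p : Equiv.Perm (Fin n) :=
    (Equiv.sumCompl (· ∈ s)).symm.trans ((e.sumCongr e').trans (Equiv.sumCompl (· ∈ t)))
  refine ⟨p, ?_⟩
  have hsub : s.image p ⊆ t := by
    intro i hi
    obtain ⟨a, ha, rfl⟩ := Finset.mem_image.mp hi
    have : p a = (e ⟨a, ha⟩ : Fin n) := by
      simp [p, Equiv.sumCompl_symm_apply_of_pos (p := (· ∈ s)) ha]
    rw [this]
    exact (e ⟨a, ha⟩).2
  refine Finset.eq_of_subset_of_card_le hsub ?_
  rw [Finset.card_image_of_injective _ p.injective, h]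

lemma fiber_card_const {n : ℕ} (j : Fin n) (T : Finset (Fin n))
    (hT : T.card = (Finset.Iic j).card) :
    (Finset.univ.filter fun σ : Equiv.Perm (Fin n) => (Finset.Iic j).image σ = T).card
    = (Finset.univ.filter fun σ : Equiv.Perm (Fin n) =>
        (Finset.Iic j).image σ = Finset.Iic j).card := by
  classical
  obtain ⟨p, hp⟩ := exists_perm_image T (Finset.Iic j) hT
  refine Finset.card_nbij' (fun σ => p * σ) (fun σ => p⁻¹ * σ) ?_ ?_ ?_ ?_
  · intro σ hσ
    simp only [Finset.mem_coe, Finset.mem_filter, Finset.mem_univ, true_and] at hσ ⊢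
    have : (Finset.Iic j).image (⇑(p * σ)) = ((Finset.Iic j).image σ).image p := by
      rw [Finset.image_image]; rfl
    rw [this, hσ, hp]
  · intro σ hσ
    simp only [Finset.mem_coe, Finset.mem_filter, Finset.mem_univ, true_and] at hσ ⊢
    have h1 : (Finset.Iic j).image (⇑(p⁻¹ * σ)) = ((Finset.Iic j).image σ).image ⇑p⁻¹ := by
      rw [Finset.image_image]; rfl
    have h2 : Finset.image (⇑p⁻¹) (Finset.Iic j) = T := by
      rw [← hp, Finset.image_image]
      have : (⇑p⁻¹ ∘ ⇑p) = id := by funext a; simp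
      rw [this, Finset.image_id]
    rw [h1, hσ, h2]
  · intro σ _; show p⁻¹ * (p * σ) = σ; rw [← mul_assoc]; simp
  · intro σ _; show p * (p⁻¹ * σ) = σ; rw [← mul_assoc]; simp

lemma sum_perm_eq {n : ℕ} (j : Fin n) (c : Fin n → ℝ) :
    ∑ σ : Equiv.Perm (Fin n), ∏ k ∈ Finset.Iic j, c (σ k)
    = ((Finset.univ.filter fun σ : Equiv.Perm (Fin n) =>
          (Finset.Iic j).image σ = Finset.Iic j).card : ℝ)
      * ∑ T ∈ Finset.univ.powersetCard (Finset.Iic j).card, ∏ i ∈ T, c i := by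
  classical
  rw [← Finset.sum_fiberwise_of_maps_to
    (g := fun σ : Equiv.Perm (Fin n) => (Finset.Iic j).image σ)
    (t := Finset.univ.powersetCard (Finset.Iic j).card)
    (fun σ _ => by
      rw [Finset.mem_powersetCard_univ]
      exact Finset.card_image_of_injective _ σ.injective)]
  rw [Finset.mul_sum]
  refine Finset.sum_congr rfl fun T hT => ?_
  rw [Finset.mem_powersetCard_univ] at hT
  have hinner : ∀ σ ∈ Finset.univ.filter
      (fun σ : Equiv.Perm (Fin n) => (Finset.Iic j).image σ = T),
      ∏ k ∈ Finset.Iic j, c (σ k) = ∏ i ∈ T, c i := by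
    intro σ hσ
    simp only [Finset.mem_filter, Finset.mem_univ, true_and] at hσ
    rw [← hσ, Finset.prod_image (by intro a _ b _ h; exact σ.injective h)]
  rw [Finset.sum_congr rfl hinner, Finset.sum_const, nsmul_eq_mul,
    fiber_card_const j T hT]

open Polynomial in
lemma multiset_eq_of_esymm_eq {n : ℕ} (Mx My : Multiset ℝ)
    (hx : Multiset.card Mx = n) (hy : Multiset.card My = n)
    (h : ∀ k, 1 ≤ k → k ≤ n → Mx.esymm k = My.esymm k) : Mx = My := by
  have hpoly : (Mx.map fun a => X - C a).prod = (My.map fun a => X - C a).prod := by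
    ext k
    by_cases hk : k ≤ n
    · rw [Multiset.prod_X_sub_C_coeff Mx (by rw [hx]; exact hk),
        Multiset.prod_X_sub_C_coeff My (by rw [hy]; exact hk), hx, hy]
      by_cases h0 : n - k = 0
      · rw [h0]
        simp [Multiset.esymm, Multiset.powersetCard_zero_left]
      · rw [h _ (by omega) (by omega)]
    · rw [coeff_eq_zero_of_natDegree_lt, coeff_eq_zero_of_natDegree_lt] <;>
        · rw [Polynomial.natDegree_multiset_prod_X_sub_C_eq_card]
          omega
  have := congrArg Polynomial.roots hpoly
  rwa [Polynomial.roots_multiset_prod_X_sub_C, Polynomial.roots_multiset_prod_X_sub_C] at this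

theorem injective_change_of_variables (n : ℕ) (hn : 1 ≤ n) :
    Set.InjOn (fun x : Fin n → ℝ => fun j : Fin n => Xvar n j x) (Fdom n) := by
  classical
  intro x hx y hy hxy
  set cx : Fin n → ℝ := fun i => Real.cos (Real.pi * x i) with hcx
  set cy : Fin n → ℝ := fun i => Real.cos (Real.pi * y i) with hcy
  have hS : ∀ j : Fin n,
      ∑ T ∈ Finset.univ.powersetCard (Finset.Iic j).card, ∏ i ∈ T, cx i
      = ∑ T ∈ Finset.univ.powersetCard (Finset.Iic j).card, ∏ i ∈ T, cy i := by
    intro j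
    have h1 : Xvar n j x = Xvar n j y := congrFun hxy j
    rw [Xvar_eq_sum, Xvar_eq_sum, sum_perm_eq j (fun i => Real.cos (Real.pi * x i)),
      sum_perm_eq j (fun i => Real.cos (Real.pi * y i))] at h1
    have hmem : (1 : Equiv.Perm (Fin n)) ∈ Finset.univ.filter
        (fun σ : Equiv.Perm (Fin n) => (Finset.Iic j).image σ = Finset.Iic j) := by
      simp
    have hpos : (0:ℝ) < ((Finset.univ.filter fun σ : Equiv.Perm (Fin n) =>
        (Finset.Iic j).image σ = Finset.Iic j).card : ℝ) := by
      exact_mod_cast Finset.card_pos.mpr ⟨_, hmem⟩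
    exact mul_left_cancel₀ (ne_of_gt hpos) h1
  have hesymm : ∀ k, 1 ≤ k → k ≤ n →
      (Finset.univ.val.map cx).esymm k = (Finset.univ.val.map cy).esymm k := by
    intro k h1 h2
    have hc : (Finset.Iic (⟨k-1, by omega⟩ : Fin n)).card = k := by
      rw [Fin.card_Iic]; show k - 1 + 1 = k; omega
    have := hS ⟨k-1, by omega⟩
    rw [hc] at this
    rw [Finset.esymm_map_val, Finset.esymm_map_val]
    exact this
  have hM : (Finset.univ.val.map cx) = (Finset.univ.val.map cy) :=
    multiset_eq_of_esymm_eq _ _ (by simp) (by simp) hesymm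
  rw [Fin.univ_val_map, Fin.univ_val_map] at hM
  have hperm : List.Perm (List.ofFn cx) (List.ofFn cy) := Multiset.coe_eq_coe.mp hM
  have hsorted : ∀ z : Fin n → ℝ, z ∈ Fdom n →
      (List.ofFn fun i => Real.cos (Real.pi * z i)).Pairwise (· ≤ ·) := by
    intro z hz
    rw [List.pairwise_ofFn]
    intro i k hik
    exact Real.cos_le_cos_of_nonneg_of_le_pi
      (mul_nonneg Real.pi_pos.le (hz.2 k).1)
      (mul_le_of_le_one_right Real.pi_pos.le (hz.2 i).2)
      (mul_le_mul_of_nonneg_left (hz.1 i k hik.le) Real.pi_pos.le)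
  have hlist : List.ofFn cx = List.ofFn cy :=
    List.Perm.eq_of_pairwise' (hsorted x hx) (hsorted y hy) hperm
  have hcxy : cx = cy := List.ofFn_injective hlist
  funext i
  have h1 : Real.cos (Real.pi * x i) = Real.cos (Real.pi * y i) := congrFun hcxy i
  have h2 : Real.pi * x i = Real.pi * y i :=
    Real.injOn_cos
      ⟨mul_nonneg Real.pi_pos.le (hx.2 i).1, mul_le_of_le_one_right Real.pi_pos.le (hx.2 i).2⟩
      ⟨mul_nonneg Real.pi_pos.le (hy.2 i).1, mul_le_of_le_one_right Real.pi_pos.le (hy.2 i).2⟩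
      h1
  exact mul_left_cancel₀ Real.pi_ne_zero h2
end

section
/- (Product decomposition, symmetric–symmetric) Let n ≥ 1 and let λ = (λ_1,…,λ_n), μ = (μ_1,…,μ_n) ∈ ℝ^n. Then for all x ∈ ℝ^n, cos⁺_λ(x) · cos⁺_μ(x) = 2^{−n} · Σ_{σ ∈ S_n} Σ_{a ∈ {−1,+1}^n} cos⁺_{(λ_1 + a_1 μ_{σ(1)}, …, λ_n + a_n μ_{σ(n)})}(x). -/
open Real Finset

lemma sum_units_int (f : ℤˣ → ℝ) : ∑ ε : ℤˣ, f ε = f 1 + f (-1) := by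
  have h : (Finset.univ : Finset ℤˣ) = {1, -1} := by decide
  rw [h, Finset.sum_insert (by decide), Finset.sum_singleton]

lemma cos_mul_cos' (A B : ℝ) :
    Real.cos A * Real.cos B = (2 : ℝ)⁻¹ * ∑ ε : ℤˣ, Real.cos (A + ((ε : ℤ) : ℝ) * B) := by
  rw [sum_units_int]
  push_cast
  rw [show A + 1 * B = A + B by ring, show A + -1 * B = A - B by ring,
    Real.cos_add, Real.cos_sub]
  ring

theorem product_decomposition_sym_sym (n : ℕ) (hn : 1 ≤ n)
    (lam mu : Fin n → ℝ) (x : Fin n → ℝ) :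
    cosPlus n lam x * cosPlus n mu x
      = ((2 : ℝ) ^ n)⁻¹ *
          ∑ σ : Equiv.Perm (Fin n), ∑ a : Fin n → ℤˣ,
            cosPlus n (fun i => lam i + ((a i : ℤ) : ℝ) * mu (σ i)) x := by
  classical
  unfold cosPlus
  -- P σ τ a = ∏ i, cos (π * (lam (σ i) + a i * mu (τ i)) * x i)
  set P : Equiv.Perm (Fin n) → Equiv.Perm (Fin n) → (Fin n → ℤˣ) → ℝ :=
    fun σ τ a => ∏ i : Fin n,
      Real.cos (Real.pi * (lam (σ i) + ((a i : ℤ) : ℝ) * mu (τ i)) * x i) with hP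
  have lhs_eq :
      (∑ σ : Equiv.Perm (Fin n), ∏ i : Fin n, Real.cos (Real.pi * lam (σ i) * x i)) *
        (∑ σ : Equiv.Perm (Fin n), ∏ i : Fin n, Real.cos (Real.pi * mu (σ i) * x i))
      = ((2 : ℝ) ^ n)⁻¹ * ∑ σ : Equiv.Perm (Fin n), ∑ τ : Equiv.Perm (Fin n),
          ∑ a : Fin n → ℤˣ, P σ τ a := by
    rw [Finset.sum_mul_sum, Finset.mul_sum]
    refine Finset.sum_congr rfl fun σ _ => ?_
    rw [Finset.mul_sum]
    refine Finset.sum_congr rfl fun τ _ => ?_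
    rw [← Finset.prod_mul_distrib]
    have : ∀ i : Fin n,
        Real.cos (Real.pi * lam (σ i) * x i) * Real.cos (Real.pi * mu (τ i) * x i)
        = (2 : ℝ)⁻¹ * ∑ ε : ℤˣ,
            Real.cos (Real.pi * (lam (σ i) + ((ε : ℤ) : ℝ) * mu (τ i)) * x i) := by
      intro i
      rw [cos_mul_cos' (Real.pi * lam (σ i) * x i) (Real.pi * mu (τ i) * x i)]
      congr 1
      refine Finset.sum_congr rfl fun ε _ => ?_
      ring_nf
    rw [Finset.prod_congr rfl fun i _ => this i, Finset.prod_mul_distrib,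
      Finset.prod_const, Fintype.prod_sum]
    simp [hP, inv_pow]
  rw [lhs_eq]
  congr 1
  -- reindexing: (σ, a, τ) ↦ (τ, σ * τ, a ∘ τ)
  have rhs_eq : ∀ σ : Equiv.Perm (Fin n), ∀ a : Fin n → ℤˣ,
      (∑ τ : Equiv.Perm (Fin n), ∏ i : Fin n,
        Real.cos (Real.pi * (lam (τ i) + ((a (τ i) : ℤ) : ℝ) * mu (σ (τ i))) * x i))
      = ∑ τ : Equiv.Perm (Fin n), P τ (σ * τ) (fun i => a (τ i)) := by
    intro σ a
    refine Finset.sum_congr rfl fun τ _ => ?_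
    simp [hP, Equiv.Perm.mul_apply]
  have step : ∑ σ : Equiv.Perm (Fin n), ∑ a : Fin n → ℤˣ,
      (∑ τ : Equiv.Perm (Fin n), ∏ i : Fin n,
        Real.cos (Real.pi * (lam (τ i) + ((a (τ i) : ℤ) : ℝ) * mu (σ (τ i))) * x i))
      = ∑ σ : Equiv.Perm (Fin n), ∑ a : Fin n → ℤˣ,
          ∑ τ : Equiv.Perm (Fin n), P τ (σ * τ) (fun i => a (τ i)) := by
    refine Finset.sum_congr rfl fun σ _ => Finset.sum_congr rfl fun a _ => rhs_eq σ a
  have key :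
      (∑ σ : Equiv.Perm (Fin n), ∑ a : Fin n → ℤˣ,
          ∑ τ : Equiv.Perm (Fin n), P τ (σ * τ) (fun i => a (τ i)))
      = ∑ σ : Equiv.Perm (Fin n), ∑ τ : Equiv.Perm (Fin n), ∑ a : Fin n → ℤˣ, P σ τ a := by
    calc
      (∑ σ : Equiv.Perm (Fin n), ∑ a : Fin n → ℤˣ,
          ∑ τ : Equiv.Perm (Fin n), P τ (σ * τ) (fun i => a (τ i)))
        = ∑ σ : Equiv.Perm (Fin n), ∑ τ : Equiv.Perm (Fin n),
            ∑ a : Fin n → ℤˣ, P τ (σ * τ) (fun i => a (τ i)) :=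
          Finset.sum_congr rfl fun σ _ => Finset.sum_comm
      _ = ∑ σ : Equiv.Perm (Fin n), ∑ τ : Equiv.Perm (Fin n),
            ∑ a : Fin n → ℤˣ, P τ (σ * τ) a := by
          refine Finset.sum_congr rfl fun σ _ => Finset.sum_congr rfl fun τ _ => ?_
          refine Fintype.sum_equiv (Equiv.arrowCongr τ.symm (Equiv.refl ℤˣ))
            (fun a => P τ (σ * τ) (fun i => a (τ i))) (fun a => P τ (σ * τ) a)
            (fun a => ?_)
          congr 1
      _ = ∑ τ : Equiv.Perm (Fin n), ∑ σ : Equiv.Perm (Fin n),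
            ∑ a : Fin n → ℤˣ, P τ (σ * τ) a := Finset.sum_comm
      _ = ∑ σ : Equiv.Perm (Fin n), ∑ τ : Equiv.Perm (Fin n), ∑ a : Fin n → ℤˣ, P σ τ a := by
          refine Finset.sum_congr rfl fun τ _ => ?_
          exact Fintype.sum_equiv (Equiv.mulRight τ)
            (fun σ => ∑ a : Fin n → ℤˣ, P τ (σ * τ) a)
            (fun σ => ∑ a : Fin n → ℤˣ, P τ σ a) (fun σ => rfl)
  rw [step, key]
end

section
/- (Product decomposition, antisymmetric–antisymmetric) Let n ≥ 1 and let λ = (λ_1,…,λ_n), μ = (μ_1,…,μ_n) ∈ ℝ^n. Then for all x ∈ ℝ^n, cos⁻_λ(x) · cos⁻_μ(x) = 2^{−n} · Σ_{σ ∈ S_n} sgn(σ) Σ_{a ∈ {−1,+1}^n} cos⁺_{(λ_1 + a_1 μ_{σ(1)}, …, λ_n + a_n μ_{σ(n)})}(x). -/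
open Real Finset

/-- The antisymmetric multivariate cosine function
`cos⁻_λ(x) = Σ_{σ ∈ S_n} sgn(σ) ∏_{i=1}^n cos(π λ_{σ(i)} x_i)`. -/
noncomputable def cosMinus (n : ℕ) (lam x : Fin n → ℝ) : ℝ :=
  ∑ σ : Equiv.Perm (Fin n),
    ((Equiv.Perm.sign σ : ℤ) : ℝ) * ∏ i : Fin n, Real.cos (Real.pi * lam (σ i) * x i)

lemma cos_mul_cos'_s19 (a b : ℝ) :
    Real.cos a * Real.cos b = 2⁻¹ * ∑ u : ℤˣ, Real.cos (a + ((u : ℤ) : ℝ) * b) := by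
  have h : (Finset.univ : Finset ℤˣ) = {1, -1} := by decide
  rw [h, Finset.sum_pair (by decide)]
  have h1 : a + (((1 : ℤˣ) : ℤ) : ℝ) * b = a + b := by push_cast; ring
  have h2 : a + (((-1 : ℤˣ) : ℤ) : ℝ) * b = a - b := by push_cast; ring
  rw [h1, h2, Real.cos_add, Real.cos_sub]
  ring

def tripleEquiv (n : ℕ) :
    (Equiv.Perm (Fin n) × Equiv.Perm (Fin n) × (Fin n → ℤˣ)) ≃
    (Equiv.Perm (Fin n) × Equiv.Perm (Fin n) × (Fin n → ℤˣ)) where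
  toFun p := (p.2.1, p.1 * p.2.1, p.2.2 ∘ ⇑p.2.1)
  invFun p := (p.2.1 * p.1⁻¹, p.1, p.2.2 ∘ ⇑p.1⁻¹)
  left_inv p := by
    obtain ⟨σ, τ, a⟩ := p
    refine Prod.ext ?_ (Prod.ext rfl ?_)
    · simp [mul_assoc]
    · funext i; simp
  right_inv p := by
    obtain ⟨σ, τ, a⟩ := p
    refine Prod.ext rfl (Prod.ext ?_ ?_)
    · simp [mul_assoc]
    · funext i; simp

theorem product_decomposition_antisym_antisym (n : ℕ) (hn : 1 ≤ n)
    (lam mu : Fin n → ℝ) (x : Fin n → ℝ) :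
    cosMinus n lam x * cosMinus n mu x
      = ((2 : ℝ) ^ n)⁻¹ *
          ∑ σ : Equiv.Perm (Fin n),
            ((Equiv.Perm.sign σ : ℤ) : ℝ) *
              ∑ a : Fin n → ℤˣ,
                cosPlus n (fun i => lam i + ((a i : ℤ) : ℝ) * mu (σ i)) x := by
  classical
  set F : Equiv.Perm (Fin n) × Equiv.Perm (Fin n) × (Fin n → ℤˣ) → ℝ := fun p =>
    ((Equiv.Perm.sign p.1 : ℤ) : ℝ) * ((Equiv.Perm.sign p.2.1 : ℤ) : ℝ) *
      ∏ i : Fin n, Real.cos (Real.pi * lam (p.1 i) * x i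
        + ((p.2.2 i : ℤ) : ℝ) * (Real.pi * mu (p.2.1 i) * x i)) with hF
  set G : Equiv.Perm (Fin n) × Equiv.Perm (Fin n) × (Fin n → ℤˣ) → ℝ := fun p =>
    ((Equiv.Perm.sign p.1 : ℤ) : ℝ) *
      ∏ i : Fin n, Real.cos (Real.pi *
        (lam (p.2.1 i) + ((p.2.2 (p.2.1 i) : ℤ) : ℝ) * mu (p.1 (p.2.1 i))) * x i) with hG
  have hL : cosMinus n lam x * cosMinus n mu x = ((2 : ℝ) ^ n)⁻¹ * ∑ p, F p := by
    unfold cosMinus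
    rw [Fintype.sum_mul_sum]
    rw [Fintype.sum_prod_type]
    rw [Finset.mul_sum]
    refine Finset.sum_congr rfl fun σ _ => ?_
    rw [Fintype.sum_prod_type, Finset.mul_sum]
    refine Finset.sum_congr rfl fun τ _ => ?_
    rw [mul_mul_mul_comm, ← Finset.prod_mul_distrib]
    simp_rw [cos_mul_cos'_s19]
    rw [Finset.prod_mul_distrib, Finset.prod_const, Finset.prod_univ_sum,
      Fintype.piFinset_univ]
    simp only [hF, Finset.mul_sum]
    refine Finset.sum_congr rfl fun a _ => ?_
    rw [Finset.card_univ, Fintype.card_fin, inv_pow]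
    ring
  have hR : (∑ σ : Equiv.Perm (Fin n),
        ((Equiv.Perm.sign σ : ℤ) : ℝ) *
          ∑ a : Fin n → ℤˣ,
            cosPlus n (fun i => lam i + ((a i : ℤ) : ℝ) * mu (σ i)) x)
      = ∑ p, G p := by
    rw [Fintype.sum_prod_type]
    refine Finset.sum_congr rfl fun σ _ => ?_
    unfold cosPlus
    rw [Finset.mul_sum, Fintype.sum_prod_type, Finset.sum_comm]
    refine Finset.sum_congr rfl fun a _ => ?_
    rw [Finset.mul_sum]
  have key : (∑ p, G p) = ∑ p, F p := by
    refine Fintype.sum_equiv (tripleEquiv n) G F fun p => ?_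
    obtain ⟨σ, τ, a⟩ := p
    simp only [hG, hF, tripleEquiv, Equiv.coe_fn_mk, Equiv.Perm.mul_apply,
      Function.comp_apply, Equiv.Perm.sign_mul, Units.val_mul, Int.cast_mul]
    have hprod : (∏ i : Fin n, Real.cos (Real.pi *
          (lam (τ i) + ((a (τ i) : ℤ) : ℝ) * mu (σ (τ i))) * x i))
        = ∏ i : Fin n, Real.cos (Real.pi * lam (τ i) * x i
          + ((a (τ i) : ℤ) : ℝ) * (Real.pi * mu (σ (τ i)) * x i)) := by
      refine Finset.prod_congr rfl fun i _ => ?_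
      congr 1; ring
    rw [hprod]
    rcases Int.units_eq_one_or (Equiv.Perm.sign σ) with h | h <;>
      rcases Int.units_eq_one_or (Equiv.Perm.sign τ) with h' | h' <;>
        simp [h, h'] <;> ring
  rw [hL, hR, key]
end
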